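/- Let K > 0, let 0 < p ≤ 1, let Q be a finite graph in which every vertex has degree less than K/p, and let τ ∈ [p, K]. Then there is a bipartite subgraph R of Q such that every vertex has degree at most ⌈τ/p⌉ in R and |R| ≥ (τ/(2K))|Q|. -/

import Mathlib

open Filter

/-- The number of edges of a graph. -/
noncomputable def edgeCount {V : Type*} (G : SimpleGraph V) : ℕ := G.edgeSet.ncard

open Classical in
/-- The probability, in the Erdős–Rényi model `G(n,p)`, of the set of graphs
satisfying the property `P`. -/
noncomputable def erProb (n : ℕ) (p : ℝ) (P : SimpleGraph (Fin n) → Prop) : ℝ :=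
  ∑ G : SimpleGraph (Fin n),
    if P G then p ^ edgeCount G * (1 - p) ^ (n.choose 2 - edgeCount G) else 0

/-- `∇(S,T)`: the number of edges of `G` with one endpoint in `S` and one in `T`
(for disjoint `S`, `T`). -/
noncomputable def nablaCount {V : Type*} (G : SimpleGraph V) (S T : Set V) : ℕ :=
  {e ∈ G.edgeSet | ∃ a ∈ S, ∃ b ∈ T, e = s(a, b)}.ncard

/-- `|G[S]|`: the number of edges of `G` with both endpoints in `S`. -/
noncomputable def edgesInside {V : Type*} (G : SimpleGraph V) (S : Set V) : ℕ :=
  {e ∈ G.edgeSet | ∀ v ∈ e, v ∈ S}.ncard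

/-- `d_S(x)`: the number of neighbors of `x` in `G` lying in `S`. -/
noncomputable def degIn {V : Type*} (G : SimpleGraph V) (S : Set V) (x : V) : ℕ :=
  (G.neighborSet x ∩ S).ncard

/-- `d_S(x,y)`: the number of common neighbors of `x` and `y` in `G` lying in `S`. -/
noncomputable def codegIn {V : Type*} (G : SimpleGraph V) (S : Set V) (x y : V) : ℕ :=
  (G.neighborSet x ∩ G.neighborSet y ∩ S).ncard

/-- A cut `(A, Aᶜ)` of the vertex set `Fin n` is balanced if `|A| = (1 ± η) n/2`. -/
def balancedCut (n : ℕ) (η : ℝ) (A : Set (Fin n)) : Prop :=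
  (1 - η) * n / 2 ≤ (A.ncard : ℝ) ∧ (A.ncard : ℝ) ≤ (1 + η) * n / 2

/-- `X(Π) = {x ∈ A : d_B(x) < (1-2ε)np/4}` for the cut `Π = (A, Aᶜ)`. -/
noncomputable def cutX {n : ℕ} (G : SimpleGraph (Fin n)) (ε p : ℝ) (A : Set (Fin n)) :
    Set (Fin n) :=
  {x ∈ A | (degIn G Aᶜ x : ℝ) < (1 - 2 * ε) * n * p / 4}

/-- `T(Π) = {x ∈ A : d_B(x) < (1-ε)np/2}` for the cut `Π = (A, Aᶜ)`. -/
noncomputable def cutT {n : ℕ} (G : SimpleGraph (Fin n)) (ε p : ℝ) (A : Set (Fin n)) :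
    Set (Fin n) :=
  {x ∈ A | (degIn G Aᶜ x : ℝ) < (1 - ε) * n * p / 2}

/-- `Q(Π)` (with `α = 0.8`): the pairs `{x,y} ⊆ A` which either meet `X(Π)` or have
abnormally small co-degree `d_B(x,y)` into `B = Aᶜ`. -/
noncomputable def cutQ {n : ℕ} (G : SimpleGraph (Fin n)) (ε p : ℝ) (A : Set (Fin n)) :
    Set (Sym2 (Fin n)) :=
  {e | ∃ x y : Fin n, x ≠ y ∧ e = s(x, y) ∧ x ∈ A ∧ y ∈ A ∧
    (x ∈ cutX G ε p A ∨ y ∈ cutX G ε p A ∨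
     (x ∉ cutT G ε p A ∧ y ∉ cutT G ε p A ∧ (codegIn G Aᶜ x y : ℝ) < 0.8 * n * p ^ 2 / 2) ∨
     ((x ∈ cutT G ε p A ↔ y ∉ cutT G ε p A) ∧ (codegIn G Aᶜ x y : ℝ) < 0.8 * n * p ^ 2 / 4) ∨
     (x ∈ cutT G ε p A ∧ y ∈ cutT G ε p A ∧ (codegIn G Aᶜ x y : ℝ) < 0.8 * n * p ^ 2 / 8))}

/-- `Q_v(Π)`: the pairs in `Q(Π)` meeting `X(Π)`. -/
noncomputable def cutQv {n : ℕ} (G : SimpleGraph (Fin n)) (ε p : ℝ) (A : Set (Fin n)) :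
    Set (Sym2 (Fin n)) :=
  {e ∈ cutQ G ε p A | ∃ x ∈ cutX G ε p A, x ∈ e}

/-- `Q_e(Π) = Q(Π) ∖ Q_v(Π)`. -/
noncomputable def cutQe {n : ℕ} (G : SimpleGraph (Fin n)) (ε p : ℝ) (A : Set (Fin n)) :
    Set (Sym2 (Fin n)) :=
  cutQ G ε p A \ cutQv G ε p A

/-- `b(G)`: the maximum number of edges of a bipartite subgraph of `G`. -/
noncomputable def maxBip {V : Type*} (G : SimpleGraph V) : ℕ :=
  sSup {m | ∃ F : SimpleGraph V, F ≤ G ∧ F.Colorable 2 ∧ edgeCount F = m}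

/-- `t(G)`: the maximum number of edges of a triangle-free subgraph of `G`. -/
noncomputable def maxTriFree {V : Type*} (G : SimpleGraph V) : ℕ :=
  sSup {m | ∃ F : SimpleGraph V, F ≤ G ∧ F.CliqueFree 3 ∧ edgeCount F = m}

/-- The set of edges of `G` crossing the cut `(A, Aᶜ)`. -/
def cutEdgeSet {V : Type*} (G : SimpleGraph V) (A : Set V) : Set (Sym2 V) :=
  {e ∈ G.edgeSet | ∃ a ∈ A, ∃ b ∈ Aᶜ, e = s(a, b)}



section konigAux
open Finset

lemma fill_lemma {V : Type*} [Fintype V] [DecidableEq V] : ∀ (n : ℕ) (r c : V → ℕ), (∑ x, r x = n) → (∑ y, c y = n) →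
    ∃ E : V → V → ℕ, (∀ x, ∑ y, E x y = r x) ∧ (∀ y, ∑ x, E x y = c y) := by
  intro n
  induction n with
  | zero =>
    intro r c hr hc
    refine ⟨fun _ _ => 0, fun x => ?_, fun y => ?_⟩ <;> simp
    · exact (Finset.sum_eq_zero_iff.mp hr x (mem_univ x)).symm
    · exact (Finset.sum_eq_zero_iff.mp hc y (mem_univ y)).symm
  | succ n ih =>
    intro r c hr hc
    have hx : ∃ x, 0 < r x := by
      by_contra h
      push_neg at h
      simp only [Nat.le_zero] at h
      simp [h] at hr
    have hy : ∃ y, 0 < c y := by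
      by_contra h
      push_neg at h
      simp only [Nat.le_zero] at h
      simp [h] at hc
    obtain ⟨x₀, hx₀⟩ := hx
    obtain ⟨y₀, hy₀⟩ := hy
    have hr' : ∑ x, Function.update r x₀ (r x₀ - 1) x = n := by
      rw [Finset.sum_update_of_mem (mem_univ x₀)]
      have h2 := Finset.sum_eq_add_sum_sdiff_singleton_of_mem (mem_univ x₀) r
      omega
    have hc' : ∑ y, Function.update c y₀ (c y₀ - 1) y = n := by
      rw [Finset.sum_update_of_mem (mem_univ y₀)]
      have h2 := Finset.sum_eq_add_sum_sdiff_singleton_of_mem (mem_univ y₀) c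
      omega
    obtain ⟨E, hE1, hE2⟩ := ih (Function.update r x₀ (r x₀ - 1))
      (Function.update c y₀ (c y₀ - 1)) hr' hc'
    refine ⟨fun x y => E x y + if x = x₀ ∧ y = y₀ then 1 else 0, fun x => ?_, fun y => ?_⟩
    · rw [Finset.sum_add_distrib, hE1]
      by_cases hxx : x = x₀
      · subst hxx
        rw [Function.update_self]
        simp only [true_and]
        rw [Finset.sum_ite_eq' univ y₀ (fun _ => 1)]
        simp [Nat.sub_add_cancel hx₀]
      · rw [Function.update_of_ne hxx]
        simp [hxx]
    · rw [Finset.sum_add_distrib, hE2]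
      by_cases hyy : y = y₀
      · subst hyy
        rw [Function.update_self]
        simp only [and_true]
        rw [Finset.sum_ite_eq' univ x₀ (fun _ => 1)]
        simp [Nat.sub_add_cancel hy₀]
      · rw [Function.update_of_ne hyy]
        simp [hyy]

lemma select_lemma {ι : Type*} [Fintype ι] [DecidableEq ι] (a : ι → ℕ) :
    ∀ (D : ℕ), D ≤ Fintype.card ι →
    ∃ t : Finset ι, t.card = D ∧ D * (∑ i, a i) ≤ Fintype.card ι * ∑ i ∈ t, a i := by
  suffices h : ∀ (k D : ℕ), D + k = Fintype.card ι →
      ∃ t : Finset ι, t.card = D ∧ D * (∑ i, a i) ≤ Fintype.card ι * ∑ i ∈ t, a i by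
    intro D hD
    exact h (Fintype.card ι - D) D (by omega)
  intro k
  induction k with
  | zero =>
    intro D hD
    refine ⟨univ, by simp; omega, Nat.mul_le_mul (by omega) le_rfl⟩
  | succ k ih =>
    intro D hD
    obtain ⟨t, htc, hts⟩ := ih (D + 1) (by omega)
    have htne : t.Nonempty := by
      rw [← Finset.card_pos, htc]; omega
    have hmin : ∃ m ∈ t, t.card * a m ≤ ∑ i ∈ t, a i := by
      apply Finset.exists_le_of_sum_le htne
      rw [← Finset.mul_sum, Finset.sum_const, smul_eq_mul]
    obtain ⟨m, hmt, hm⟩ := hmin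
    refine ⟨t.erase m, by rw [Finset.card_erase_of_mem hmt, htc]; omega, ?_⟩
    have hsplit : a m + ∑ i ∈ t.erase m, a i = ∑ i ∈ t, a i :=
      Finset.add_sum_erase t a hmt
    rw [htc] at hm
    rw [← hsplit] at hts hm
    set X := ∑ i ∈ t.erase m, a i
    set T := ∑ i, a i
    set n := Fintype.card ι
    have expand : (D + 1) * a m = D * a m + a m := by ring
    have h1 : D * a m ≤ X := by omega
    have h2 : (D+1) * (D * T) ≤ (D+1) * (n * X) := by
      calc (D+1) * (D * T) = D * ((D+1) * T) := by ring
      _ ≤ D * (n * (a m + X)) := Nat.mul_le_mul_left _ hts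
      _ = n * (D * a m + D * X) := by ring
      _ ≤ n * (X + D * X) := Nat.mul_le_mul_left _ (by omega)
      _ = (D+1) * (n * X) := by ring
    exact Nat.le_of_mul_le_mul_left h2 (by omega)

/-- One step of König's edge-colouring theorem: a bipartite graph with maximum
degree at most `M+1` contains a matching `F` whose removal decreases the maximum
degree to at most `M`. -/
lemma matching_step {V : Type*} [Fintype V] [DecidableEq V]
    (B : SimpleGraph V) [DecidableRel B.Adj] (g : V → Bool)
    (hg : ∀ ⦃x y⦄, B.Adj x y → g x ≠ g y) (M : ℕ)
    (hdeg : ∀ v, B.degree v ≤ M + 1) :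
    ∃ F : SimpleGraph V, F ≤ B ∧ (∀ v, (F.neighborSet v).ncard ≤ 1) ∧
      (∀ v, ((B \ F).neighborSet v).ncard ≤ M) := by
  classical
  set A : V → V → ℕ := fun x y => if g x = true ∧ g y = false ∧ B.Adj x y then 1 else 0 with hA
  have hAne : ∀ a b, A a b ≠ 0 → g a = true ∧ g b = false ∧ B.Adj a b := by
    intro a b h
    by_cases hc : g a = true ∧ g b = false ∧ B.Adj a b
    · exact hc
    · simp [hA, hc] at h
  have hrowt : ∀ x, g x = true → ∑ y, A x y = B.degree x := by
    intro x hx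
    have : ∀ y, A x y = if B.Adj x y then 1 else 0 := by
      intro y
      by_cases hadj : B.Adj x y
      · have : g y = false := by
          have := hg hadj
          rw [hx] at this
          exact Bool.not_eq_true _ ▸ (by simpa using this.symm)
        simp [hA, hx, this, hadj]
      · simp [hA, hadj]
    rw [Finset.sum_congr rfl (fun y _ => this y)]
    rw [Finset.sum_boole]
    rw [SimpleGraph.degree, SimpleGraph.neighborFinset_eq_filter]
    simp
  have hrowf : ∀ x, g x = false → ∑ y, A x y = 0 := by
    intro x hx
    apply Finset.sum_eq_zero
    intro y _
    simp [hA, hx]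
  have hcolt : ∀ y, g y = false → ∑ x, A x y = B.degree y := by
    intro y hy
    have : ∀ x, A x y = if B.Adj y x then 1 else 0 := by
      intro x
      by_cases hadj : B.Adj y x
      · have : g x = true := by
          have := hg hadj
          rw [hy] at this
          simpa using this.symm
        simp [hA, hy, this, hadj.symm, hadj]
      · have : ¬ B.Adj x y := fun h => hadj h.symm
        simp [hA, this, hadj]
    rw [Finset.sum_congr rfl (fun x _ => this x)]
    rw [Finset.sum_boole]
    rw [SimpleGraph.degree, SimpleGraph.neighborFinset_eq_filter]
    simp
  have hcolf : ∀ y, g y = true → ∑ x, A x y = 0 := by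
    intro y hy
    apply Finset.sum_eq_zero
    intro x _
    simp [hA, hy]
  have hrowle : ∀ x, ∑ y, A x y ≤ M + 1 := by
    intro x
    cases hx : g x with
    | true => rw [hrowt x hx]; exact hdeg x
    | false => rw [hrowf x hx]; omega
  have hcolle : ∀ y, ∑ x, A x y ≤ M + 1 := by
    intro y
    cases hy : g y with
    | true => rw [hcolf y hy]; omega
    | false => rw [hcolt y hy]; exact hdeg y
  -- deficiencies
  have hsum1 : ∑ x, (M + 1 - ∑ y, A x y) = Fintype.card V * (M+1) - ∑ x, ∑ y, A x y := by
    rw [Finset.sum_tsub_distrib]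
    · simp [Finset.sum_const, mul_comm]
    · intro x _; exact hrowle x
  have hsum2 : ∑ y, (M + 1 - ∑ x, A x y) = Fintype.card V * (M+1) - ∑ x, ∑ y, A x y := by
    rw [Finset.sum_tsub_distrib]
    · rw [Finset.sum_comm]
      simp [Finset.sum_const, mul_comm]
    · intro y _; exact hcolle y
  obtain ⟨E, hErow, hEcol⟩ := fill_lemma (Fintype.card V * (M+1) - ∑ x, ∑ y, A x y)
    (fun x => M + 1 - ∑ y, A x y) (fun y => M + 1 - ∑ x, A x y) hsum1 hsum2
  set N : V → V → ℕ := fun x y => A x y + E x y with hN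
  have hNrow : ∀ x, ∑ y, N x y = M + 1 := by
    intro x
    rw [hN]
    rw [Finset.sum_add_distrib, hErow x]
    have := hrowle x
    omega
  have hNcol : ∀ y, ∑ x, N x y = M + 1 := by
    intro y
    rw [hN]
    rw [Finset.sum_add_distrib, hEcol y]
    have := hcolle y
    omega
  -- Hall's condition
  set t : V → Finset V := fun x => univ.filter (fun y => N x y ≠ 0) with ht
  have hall : ∀ s : Finset V, s.card ≤ (s.biUnion t).card := by
    intro s
    have key : (M+1) * s.card ≤ (M+1) * (s.biUnion t).card := by
      calc (M+1) * s.card = ∑ _x ∈ s, (M+1) := by simp [mul_comm]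
      _ = ∑ x ∈ s, ∑ y, N x y := by
          exact Finset.sum_congr rfl (fun x _ => (hNrow x).symm)
      _ = ∑ x ∈ s, ∑ y ∈ t x, N x y := by
          refine Finset.sum_congr rfl (fun x _ => ?_)
          rw [ht]
          rw [Finset.sum_filter_ne_zero]
      _ ≤ ∑ x ∈ s, ∑ y ∈ s.biUnion t, N x y := by
          refine Finset.sum_le_sum (fun x hx => ?_)
          exact Finset.sum_le_sum_of_subset (Finset.subset_biUnion_of_mem t hx)
      _ = ∑ y ∈ s.biUnion t, ∑ x ∈ s, N x y := Finset.sum_comm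
      _ ≤ ∑ y ∈ s.biUnion t, ∑ x, N x y := by
          refine Finset.sum_le_sum (fun y _ => ?_)
          exact Finset.sum_le_sum_of_subset (Finset.subset_univ s)
      _ = ∑ y ∈ s.biUnion t, (M+1) := Finset.sum_congr rfl (fun y _ => hNcol y)
      _ = (M+1) * (s.biUnion t).card := by simp [mul_comm]
    exact Nat.le_of_mul_le_mul_left key (by omega)
  obtain ⟨f, hfinj, hft⟩ := (Finset.all_card_le_biUnion_card_iff_exists_injective t).mp hall
  have hfN : ∀ x, N x (f x) ≠ 0 := by
    intro x
    have := hft x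
    rw [ht] at this
    simpa using (Finset.mem_filter.mp this).2
  -- the matching
  set F : SimpleGraph V :=
    { Adj := fun a b => (f a = b ∧ A a b ≠ 0) ∨ (f b = a ∧ A b a ≠ 0)
      symm := by
        constructor
        intro a b h
        exact h.elim Or.inr Or.inl
      loopless := by
        constructor
        intro a h
        rcases h with ⟨_, h⟩ | ⟨_, h⟩ <;>
        · obtain ⟨h1, h2, _⟩ := hAne _ _ h
          rw [h1] at h2
          exact absurd h2 (by simp) } with hF
  have hFB : F ≤ B := by
    intro a b h
    rcases h with ⟨_, h⟩ | ⟨_, h⟩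
    · exact (hAne _ _ h).2.2
    · exact (hAne _ _ h).2.2.symm
  refine ⟨F, hFB, ?_, ?_⟩
  · -- max degree of F is at most 1
    intro v
    have hsub : ∀ w₁ ∈ F.neighborSet v, ∀ w₂ ∈ F.neighborSet v, w₁ = w₂ := by
      intro w₁ h₁ w₂ h₂
      simp only [SimpleGraph.mem_neighborSet] at h₁ h₂
      cases hv : g v with
      | true =>
        have c₁ : f v = w₁ := by
          rcases h₁ with ⟨h, _⟩ | ⟨_, h⟩
          · exact h
          · exact absurd (hAne _ _ h).2.1 (by rw [hv]; simp)
        have c₂ : f v = w₂ := by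
          rcases h₂ with ⟨h, _⟩ | ⟨_, h⟩
          · exact h
          · exact absurd (hAne _ _ h).2.1 (by rw [hv]; simp)
        rw [← c₁, c₂]
      | false =>
        have c₁ : f w₁ = v := by
          rcases h₁ with ⟨_, h⟩ | ⟨h, _⟩
          · exact absurd (hAne _ _ h).1 (by rw [hv]; simp)
          · exact h
        have c₂ : f w₂ = v := by
          rcases h₂ with ⟨_, h⟩ | ⟨h, _⟩
          · exact absurd (hAne _ _ h).1 (by rw [hv]; simp)
          · exact h
        exact hfinj (c₁.trans c₂.symm)
    by_cases hne : (F.neighborSet v).Nonempty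
    · obtain ⟨w, hw⟩ := hne
      have : F.neighborSet v ⊆ {w} := fun u hu => by
        simp [hsub u hu w hw]
      calc (F.neighborSet v).ncard ≤ ({w} : Set V).ncard :=
            Set.ncard_le_ncard this (Set.finite_singleton w)
      _ = 1 := Set.ncard_singleton w
    · rw [Set.not_nonempty_iff_eq_empty] at hne
      simp [hne]
  · -- degrees drop
    intro v
    by_cases hv : B.degree v ≤ M
    · have hsub : (B \ F).neighborSet v ⊆ B.neighborSet v := by
        intro u hu
        exact hu.1
      calc ((B \ F).neighborSet v).ncard ≤ (B.neighborSet v).ncard :=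
            Set.ncard_le_ncard hsub (B.neighborSet v).toFinite
      _ = B.degree v := by
            rw [SimpleGraph.degree, SimpleGraph.neighborFinset, Set.ncard_eq_toFinset_card']
      _ ≤ M := hv
    · have hdv : B.degree v = M + 1 := le_antisymm (hdeg v) (by omega)
      -- find an F-edge at v
      have hw : ∃ w, F.Adj v w := by
        cases hgv : g v with
        | true =>
          have hrow : ∑ y, A v y = M + 1 := by rw [hrowt v hgv, hdv]
          have hE0 : ∑ y, E v y = 0 := by
            have := hErow v
            omega
          have : E v (f v) = 0 :=
            Finset.sum_eq_zero_iff.mp hE0 (f v) (mem_univ (f v))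
          have hAv : A v (f v) ≠ 0 := by
            have := hfN v
            rw [hN] at this
            simpa [this] using fun h => this (by simp [h, ‹E v (f v) = 0›])
          exact ⟨f v, Or.inl ⟨rfl, hAv⟩⟩
        | false =>
          have hcol : ∑ x, A x v = M + 1 := by rw [hcolt v hgv, hdv]
          have hE0 : ∑ x, E x v = 0 := by
            have := hEcol v
            omega
          obtain ⟨x, hx⟩ := Finite.surjective_of_injective hfinj v
          have hEx : E x v = 0 := Finset.sum_eq_zero_iff.mp hE0 x (mem_univ x)
          have hAx : A x v ≠ 0 := by
            have hn := hfN x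
            rw [hx] at hn
            intro h
            exact hn (by rw [hN]; simp [h, hEx])
          exact ⟨x, Or.inr ⟨hx, hAx⟩⟩
      obtain ⟨w, hFvw⟩ := hw
      have hwB : w ∈ B.neighborSet v := hFB hFvw
      have hsub : (B \ F).neighborSet v ⊆ B.neighborSet v \ {w} := by
        intro u hu
        rcases hu with ⟨huB, huF⟩
        refine ⟨huB, ?_⟩
        simp only [Set.mem_singleton_iff]
        intro he
        exact huF (he ▸ hFvw)
      calc ((B \ F).neighborSet v).ncard ≤ (B.neighborSet v \ {w}).ncard :=
            Set.ncard_le_ncard hsub ((B.neighborSet v).toFinite.subset Set.diff_subset)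
      _ = (B.neighborSet v).ncard - 1 := by
            rw [Set.ncard_diff_singleton_of_mem hwB]
      _ ≤ M := by
            have : (B.neighborSet v).ncard = B.degree v := by
              rw [SimpleGraph.degree, SimpleGraph.neighborFinset, Set.ncard_eq_toFinset_card']
            omega

lemma ncard_neighborSet_eq_degree {V : Type*} [Fintype V] (G : SimpleGraph V)
    [DecidableRel G.Adj] (v : V) : (G.neighborSet v).ncard = G.degree v := by
  rw [SimpleGraph.degree, SimpleGraph.neighborFinset, Set.ncard_eq_toFinset_card']

lemma edgeCount_sdiff_add {V : Type*} [Fintype V] {F B : SimpleGraph V} (h : F ≤ B) :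
    edgeCount F + edgeCount (B \ F) = edgeCount B := by
  have hsub : F.edgeSet ⊆ B.edgeSet := SimpleGraph.edgeSet_mono h
  have hfin : B.edgeSet.Finite := B.edgeSet.toFinite
  rw [edgeCount, edgeCount, edgeCount, SimpleGraph.edgeSet_sdiff,
    Set.ncard_diff hsub]
  have := Set.ncard_le_ncard hsub hfin
  omega

/-- König edge-colouring: a bipartite graph with maximum degree `≤ M` decomposes
into `M` matchings. -/
lemma koenig_decomp {V : Type*} [Fintype V] [DecidableEq V] :
    ∀ (M : ℕ) (B : SimpleGraph V) (g : V → Bool),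
    (∀ ⦃x y⦄, B.Adj x y → g x ≠ g y) → (∀ v, (B.neighborSet v).ncard ≤ M) →
    ∃ d : Fin M → SimpleGraph V,
      (∀ i, d i ≤ B) ∧ (∀ i v, ((d i).neighborSet v).ncard ≤ 1) ∧
      (∀ i j, i ≠ j → Disjoint ((d i).edgeSet) ((d j).edgeSet)) ∧
      (∑ i, edgeCount (d i)) = edgeCount B := by
  intro M
  induction M with
  | zero =>
    intro B g hg hdeg
    refine ⟨Fin.elim0, fun i => i.elim0, fun i => i.elim0, fun i => i.elim0, ?_⟩
    have : B.edgeSet = ∅ := by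
      ext e
      refine ⟨fun he => ?_, fun he => absurd he (Set.notMem_empty e)⟩
      induction e with
      | _ a b =>
        rw [SimpleGraph.mem_edgeSet] at he
        have hb : b ∈ B.neighborSet a := he
        have : 0 < (B.neighborSet a).ncard :=
          (Set.ncard_pos (B.neighborSet a).toFinite).mpr ⟨b, hb⟩
        have h0 := hdeg a
        omega
    simp [edgeCount, this]
  | succ M ih =>
    intro B g hg hdeg
    classical
    obtain ⟨F, hFB, hF1, hFdrop⟩ := matching_step B g hg M
      (fun v => by rw [← ncard_neighborSet_eq_degree]; exact hdeg v)
    have hg' : ∀ ⦃x y⦄, (B \ F).Adj x y → g x ≠ g y := fun x y h => hg h.1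
    obtain ⟨d', hd'B, hd'1, hd'dis, hd'sum⟩ := ih (B \ F) g hg' hFdrop
    refine ⟨Fin.cons F d', ?_, ?_, ?_, ?_⟩
    · intro i
      refine i.cases ?_ ?_
      · simpa using hFB
      · intro j
        simpa using (hd'B j).trans (sdiff_le)
    · intro i
      refine i.cases ?_ ?_
      · simpa using hF1
      · intro j
        simpa using hd'1 j
    · have hdisF : ∀ j, Disjoint F.edgeSet ((d' j).edgeSet) := by
        intro j
        rw [Set.disjoint_right]
        intro e he
        have : e ∈ (B \ F).edgeSet := SimpleGraph.edgeSet_mono (hd'B j) he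
        rw [SimpleGraph.edgeSet_sdiff] at this
        exact this.2
      intro i j hij
      rcases Fin.eq_zero_or_eq_succ i with hi | ⟨i', hi⟩ <;>
        rcases Fin.eq_zero_or_eq_succ j with hj | ⟨j', hj⟩ <;> subst hi <;> subst hj
      · exact absurd rfl hij
      · simpa using hdisF j'
      · simpa using (hdisF i').symm
      · simp only [Fin.cons_succ]
        exact hd'dis i' j' (fun h => hij (by rw [h]))
    · rw [Fin.sum_univ_succ]
      simp only [Fin.cons_zero, Fin.cons_succ]
      rw [hd'sum, edgeCount_sdiff_add hFB]

lemma edgeCount_eq_card {V : Type*} (G : SimpleGraph V) [Fintype G.edgeSet] :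
    edgeCount G = G.edgeFinset.card := by
  rw [edgeCount, SimpleGraph.edgeFinset, Set.ncard_eq_toFinset_card']

lemma exists_maxcut {V : Type*} [Fintype V] [DecidableEq V] (Q : SimpleGraph V) :
    ∃ (g : V → Bool) (B : SimpleGraph V), B ≤ Q ∧ (∀ ⦃x y⦄, B.Adj x y → g x ≠ g y) ∧
      edgeCount Q ≤ 2 * edgeCount B := by
  classical
  set cross : (V → Bool) → Sym2 V → Prop :=
    fun g => Sym2.lift ⟨fun x y => g x ≠ g y, fun x y => by simp [ne_comm]⟩ with hcross
  set cutG : (V → Bool) → SimpleGraph V := fun g =>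
    { Adj := fun x y => Q.Adj x y ∧ g x ≠ g y
      symm := ⟨fun x y h => ⟨h.1.symm, Ne.symm h.2⟩⟩
      loopless := ⟨fun x h => Q.irrefl h.1⟩ } with hcut
  have hcutle : ∀ g, cutG g ≤ Q := fun g x y h => h.1
  have hedge : ∀ g, (cutG g).edgeFinset = Q.edgeFinset.filter (cross g) := by
    intro g
    ext e
    induction e with
    | _ a b =>
      simp [hcut, hcross, SimpleGraph.mem_edgeFinset, Finset.mem_filter]
  set N : (V → Bool) → ℕ := fun g => (Q.edgeFinset.filter (cross g)).card with hN
  obtain ⟨g, -, hmax⟩ := Finset.exists_max_image (univ : Finset (V → Bool)) N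
    ⟨fun _ => true, mem_univ _⟩
  -- per-vertex inequality
  have hvert : ∀ v, Q.degree v ≤ 2 * (cutG g).degree v := by
    intro v
    set g' : V → Bool := Function.update g v (!g v) with hg'
    set I : Finset (Sym2 V) := Q.edgeFinset.filter (fun e => v ∈ e) with hI
    set J : Finset (Sym2 V) := Q.edgeFinset.filter (fun e => ¬ v ∈ e) with hJ
    have hIJ : Q.edgeFinset = I ∪ J := (Finset.filter_union_filter_not_eq _ _).symm
    have hIJdis : Disjoint I J := Finset.disjoint_filter_filter_not _ _ _
    -- cross status on J is unchanged
    have hJsame : J.filter (cross g') = J.filter (cross g) := by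
      apply Finset.filter_congr
      intro e he
      rw [hJ, Finset.mem_filter] at he
      obtain ⟨heQ, hev⟩ := he
      induction e with
      | _ a b =>
        have ha : a ≠ v := fun h => hev (h ▸ Sym2.mem_mk_left a b)
        have hb : b ≠ v := fun h => hev (h ▸ Sym2.mem_mk_right a b)
        simp [hcross, hg', Function.update_of_ne ha, Function.update_of_ne hb]
    -- cross status on I is flipped
    have hIflip : ∀ e ∈ I, cross g' e ↔ ¬ cross g e := by
      intro e he
      rw [hI, Finset.mem_filter] at he
      obtain ⟨heQ, hev⟩ := he
      rw [SimpleGraph.mem_edgeFinset] at heQ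
      induction e with
      | _ a b =>
        have hab : a ≠ b := (SimpleGraph.mem_edgeSet Q).mp heQ |>.ne
        rw [Sym2.mem_iff] at hev
        rcases hev with h | h
        · subst h
          simp only [hcross, Sym2.lift_mk, hg']
          rw [Function.update_self, Function.update_of_ne (Ne.symm hab)]
          cases g v <;> cases g b <;> simp
        · subst h
          simp only [hcross, Sym2.lift_mk, hg']
          rw [Function.update_self, Function.update_of_ne hab]
          cases g a <;> cases g v <;> simp
    have hsplit : ∀ h : V → Bool,
        N h = (I.filter (cross h)).card + (J.filter (cross h)).card := by
      intro h
      simp only [hN]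
      rw [hIJ, Finset.filter_union, Finset.card_union_of_disjoint
        (Finset.disjoint_filter_filter hIJdis)]
    have hflipcard : (I.filter (cross g')).card = I.card - (I.filter (cross g)).card := by
      have : I.filter (cross g') = I \ I.filter (cross g) := by
        ext e
        simp only [Finset.mem_filter, Finset.mem_sdiff]
        constructor
        · intro ⟨he, hc⟩
          exact ⟨he, fun hmem => ((hIflip e he).mp hc) hmem.2⟩
        · intro ⟨he, hc⟩
          refine ⟨he, (hIflip e he).mpr (fun hcg => hc ⟨he, hcg⟩)⟩
      rw [this, Finset.card_sdiff_of_subset (Finset.filter_subset _ _)]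
    have hle : N g' ≤ N g := hmax g' (mem_univ g')
    rw [hsplit g', hsplit g, hJsame, hflipcard] at hle
    have hIcard : (I.filter (cross g)).card ≤ I.card := Finset.card_le_card (Finset.filter_subset _ _)
    have hkey : I.card ≤ 2 * (I.filter (cross g)).card := by omega
    -- identify the two cards with degrees
    have hWdeg : I.card = Q.degree v := by
      rw [hI, ← SimpleGraph.incidenceFinset_eq_filter, SimpleGraph.card_incidenceFinset_eq_degree]
    have hCdeg : (I.filter (cross g)).card = (cutG g).degree v := by
      rw [hI, Finset.filter_comm, ← hedge g, ← SimpleGraph.incidenceFinset_eq_filter,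
        SimpleGraph.card_incidenceFinset_eq_degree]
    rw [hWdeg, hCdeg] at hkey
    exact hkey
  -- sum over vertices
  have hsumQ := SimpleGraph.sum_degrees_eq_twice_card_edges Q
  have hsumC := SimpleGraph.sum_degrees_eq_twice_card_edges (cutG g)
  have hsum : ∑ v, Q.degree v ≤ ∑ v, 2 * (cutG g).degree v :=
    Finset.sum_le_sum (fun v _ => hvert v)
  rw [hsumQ] at hsum
  rw [← Finset.mul_sum, hsumC] at hsum
  refine ⟨g, cutG g, hcutle g, fun x y h => h.2, ?_⟩
  rw [edgeCount_eq_card Q, edgeCount_eq_card (cutG g)]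
  omega

lemma sup_ndeg_le {V : Type*} {ι : Type*} [DecidableEq ι] (f : ι → SimpleGraph V)
    (h1 : ∀ i v, ((f i).neighborSet v).ncard ≤ 1) :
    ∀ (s : Finset ι) (v : V), (((s.sup f).neighborSet v)).ncard ≤ s.card := by
  intro s
  induction s using Finset.induction with
  | empty => intro v; have : (⊥ : SimpleGraph V).neighborSet v = ∅ := rfl; simp [this]
  | insert a s hni ih =>
    intro v
    rw [Finset.sup_insert]
    have : ((f a ⊔ s.sup f).neighborSet v) =
        (f a).neighborSet v ∪ (s.sup f).neighborSet v := rfl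
    rw [this]
    calc ((f a).neighborSet v ∪ (s.sup f).neighborSet v).ncard
        ≤ ((f a).neighborSet v).ncard + ((s.sup f).neighborSet v).ncard :=
          Set.ncard_union_le _ _
      _ ≤ 1 + s.card := Nat.add_le_add (h1 a v) (ih v)
      _ = (insert a s).card := by rw [Finset.card_insert_of_notMem hni]; omega

lemma sup_edgeSet {V : Type*} {ι : Type*} [DecidableEq ι] (f : ι → SimpleGraph V)
    (s : Finset ι) : (s.sup f).edgeSet = ⋃ i ∈ s, (f i).edgeSet := by
  induction s using Finset.induction with
  | empty => simp
  | insert a s hni ih =>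
    rw [Finset.sup_insert, SimpleGraph.edgeSet_sup, ih]
    simp [Set.biUnion_insert]

lemma sup_edgeCount {V : Type*} [Fintype V] {ι : Type*} [DecidableEq ι]
    (f : ι → SimpleGraph V)
    (hdis : ∀ i j, i ≠ j → Disjoint ((f i).edgeSet) ((f j).edgeSet)) :
    ∀ s : Finset ι, edgeCount (s.sup f) = ∑ i ∈ s, edgeCount (f i) := by
  intro s
  induction s using Finset.induction with
  | empty => simp [edgeCount]
  | insert a s hni ih =>
    rw [Finset.sup_insert, Finset.sum_insert hni, ← ih]
    rw [edgeCount, SimpleGraph.edgeSet_sup, Set.ncard_union_eq ?_ (Set.toFinite _) (Set.toFinite _)]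
    · rfl
    · rw [sup_edgeSet]
      rw [Set.disjoint_iff_forall_ne]
      rintro e he e' he' rfl
      simp only [Set.mem_iUnion] at he'
      obtain ⟨i, hi, hei⟩ := he'
      have : a ≠ i := fun h => hni (h ▸ hi)
      exact Set.disjoint_iff_forall_ne.mp (hdis a i this) he hei rfl

end konigAux

/-- A graph `Q` with all degrees less than `K/p` contains, for any `τ ∈ [p, K]`, a
bipartite subgraph `R` with all degrees at most `⌈τ/p⌉` and `|R| ≥ (τ/(2K))|Q|`. -/
theorem exists_bipartite_bounded_degree_subgraph {V : Type*} [Fintype V]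
    (K p τ : ℝ) (hK : 0 < K) (hp0 : 0 < p) (hp1 : p ≤ 1)
    (hτp : p ≤ τ) (hτK : τ ≤ K)
    (Q : SimpleGraph V) (hdeg : ∀ v : V, ((Q.neighborSet v).ncard : ℝ) < K / p) :
    ∃ R : SimpleGraph V, R ≤ Q ∧ R.Colorable 2 ∧
      (∀ v : V, (R.neighborSet v).ncard ≤ ⌈τ / p⌉₊) ∧
      τ / (2 * K) * (edgeCount Q : ℝ) ≤ (edgeCount R : ℝ) := by
  classical
  have hτ0 : 0 < τ := hp0.trans_le hτp
  by_cases hQ0 : edgeCount Q = 0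
  · refine ⟨⊥, bot_le, ⟨SimpleGraph.Coloring.mk (fun _ => 0) (by simp)⟩, fun v => ?_, ?_⟩
    · have : (⊥ : SimpleGraph V).neighborSet v = ∅ := rfl
      simp [this]
    · have hb : edgeCount (⊥ : SimpleGraph V) = 0 := by
        simp [edgeCount]
      rw [hQ0, hb]
      norm_num
  -- Q has an edge
  have hQne : Q.edgeSet.Nonempty := by
    rw [Set.nonempty_iff_ne_empty]
    intro h
    exact hQ0 (by simp [edgeCount, h])
  obtain ⟨e, he⟩ := hQne
  induction e with
  | _ a b =>
  rw [SimpleGraph.mem_edgeSet] at he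
  -- the maximum degree M
  set M : ℕ := Finset.univ.sup (fun v => (Q.neighborSet v).ncard) with hM
  have hMdeg : ∀ v, (Q.neighborSet v).ncard ≤ M := fun v =>
    Finset.le_sup (f := fun v => (Q.neighborSet v).ncard) (Finset.mem_univ v)
  have hM1 : 1 ≤ M := by
    have : b ∈ Q.neighborSet a := he
    have h1 : 0 < (Q.neighborSet a).ncard :=
      (Set.ncard_pos (Q.neighborSet a).toFinite).mpr ⟨b, this⟩
    exact h1.trans_le (hMdeg a)
  have hMK : (M : ℝ) < K / p := by
    obtain ⟨v0, -, hv0⟩ := Finset.exists_mem_eq_sup (Finset.univ : Finset V) ⟨a, Finset.mem_univ a⟩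
      (fun v => (Q.neighborSet v).ncard)
    rw [hM, hv0]
    exact hdeg v0
  set D : ℕ := ⌈τ / p⌉₊ with hD
  have hD1 : 1 ≤ D := by
    rw [hD]
    rw [Nat.one_le_ceil_iff]
    positivity
  have hDτ : τ / p ≤ (D : ℝ) := Nat.le_ceil _
  set D' : ℕ := min D M with hD'
  have hD'1 : 1 ≤ D' := le_min hD1 hM1
  -- max cut
  obtain ⟨g, B, hBQ, hBg, hBcut⟩ := exists_maxcut Q
  have hdegB : ∀ v, (B.neighborSet v).ncard ≤ M := fun v =>
    (Set.ncard_le_ncard (fun u hu => hBQ hu) (Q.neighborSet v).toFinite).trans (hMdeg v)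
  -- König decomposition
  obtain ⟨d, hdB, hd1, hddis, hdsum⟩ := koenig_decomp M B g hBg hdegB
  -- select D' largest classes
  obtain ⟨t, htc, hsel⟩ := select_lemma (fun i => edgeCount (d i)) D'
    (by rw [Fintype.card_fin]; exact min_le_right _ _)
  rw [Fintype.card_fin, hdsum] at hsel
  set R : SimpleGraph V := t.sup d with hR
  have hRB : R ≤ B := Finset.sup_le (fun i _ => hdB i)
  have hRQ : R ≤ Q := hRB.trans hBQ
  have hRcount : edgeCount R = ∑ i ∈ t, edgeCount (d i) := sup_edgeCount d hddis t
  rw [← hRcount] at hsel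
  -- hsel : D' * edgeCount B ≤ M * edgeCount R
  refine ⟨R, hRQ, ?_, ?_, ?_⟩
  · exact ⟨SimpleGraph.Coloring.mk (fun v => if g v = true then 0 else 1) (by
      intro x y hxy
      have := hBg (hRB hxy)
      cases hgx : g x <;> cases hgy : g y <;> simp [hgx, hgy] at this ⊢ <;> omega)⟩
  · intro v
    calc (R.neighborSet v).ncard ≤ t.card := sup_ndeg_le d hd1 t v
    _ = D' := htc
    _ ≤ D := min_le_left _ _
  · -- numerical conclusion
    have hcast : (D' : ℝ) * (edgeCount Q : ℝ) ≤ 2 * ((M : ℝ) * (edgeCount R : ℝ)) := by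
      have h1 : D' * edgeCount Q ≤ D' * (2 * edgeCount B) :=
        Nat.mul_le_mul_left _ hBcut
      have h2 : D' * (2 * edgeCount B) = 2 * (D' * edgeCount B) := by ring
      have h3 : 2 * (D' * edgeCount B) ≤ 2 * (M * edgeCount R) :=
        Nat.mul_le_mul_left _ hsel
      have : D' * edgeCount Q ≤ 2 * (M * edgeCount R) := by omega
      exact_mod_cast this
    have hτM : τ * (M : ℝ) ≤ K * (D' : ℝ) := by
      rcases min_cases D M with ⟨hmin, hle⟩ | ⟨hmin, hle⟩
      · -- D' = D, M ≥ D...  here hle : D ≤ M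
        rw [hD', hmin]
        have hMKp : (M : ℝ) ≤ K / p := le_of_lt hMK
        calc τ * (M : ℝ) ≤ τ * (K / p) := by
              apply mul_le_mul_of_nonneg_left hMKp (le_of_lt hτ0)
        _ = (τ / p) * K := by ring
        _ ≤ (D : ℝ) * K := by
              apply mul_le_mul_of_nonneg_right hDτ (le_of_lt hK)
        _ = K * (D : ℝ) := by ring
      · rw [hD', hmin]
        exact mul_le_mul_of_nonneg_right hτK (by positivity)
    have hD'0 : (0 : ℝ) < (D' : ℝ) := by exact_mod_cast hD'1
    have hR0 : (0 : ℝ) ≤ (edgeCount R : ℝ) := by positivity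
    have hQ0' : (0 : ℝ) ≤ (edgeCount Q : ℝ) := by positivity
    rw [div_mul_eq_mul_div, div_le_iff₀ (by positivity : (0:ℝ) < 2 * K)]
    -- τ * Q ≤ R * (2 * K)
    have key : (D' : ℝ) * (τ * (edgeCount Q : ℝ)) ≤ (D' : ℝ) * ((edgeCount R : ℝ) * (2 * K)) := by
      calc (D' : ℝ) * (τ * (edgeCount Q : ℝ)) = τ * ((D' : ℝ) * (edgeCount Q : ℝ)) := by ring
      _ ≤ τ * (2 * ((M : ℝ) * (edgeCount R : ℝ))) :=
            mul_le_mul_of_nonneg_left hcast (le_of_lt hτ0)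
      _ = (2 * (edgeCount R : ℝ)) * (τ * (M : ℝ)) := by ring
      _ ≤ (2 * (edgeCount R : ℝ)) * (K * (D' : ℝ)) := by
            apply mul_le_mul_of_nonneg_left hτM (by positivity)
      _ = (D' : ℝ) * ((edgeCount R : ℝ) * (2 * K)) := by ring
    exact le_of_mul_le_mul_left key hD'0
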